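/- (Scaling in E_σ^s, dilation μ < 1) Let s ≤ 0, σ ∈ ℝ, φ ∈ E_σ^s(ℝ^d), 0 < μ < 1, and φ_μ(x) = φ(μx). Then ‖φ_μ‖_{E_σ^{s/μ}} ≤ C μ^{−d/2+σ} ‖φ‖_{E_σ^s} when σ ≤ 0, and ‖φ_μ‖_{E_σ^{s/μ}} ≤ C μ^{−d/2} ‖φ‖_{E_σ^s} when σ > 0. -/

import Mathlib

open MeasureTheory FourierTransform ENNReal

open RealInnerProductSpace

noncomputable section

abbrev Vd (d : ℕ) := EuclideanSpace ℝ (Fin d)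

def l1 {d : ℕ} (ξ : Vd d) : ℝ := ∑ i, |ξ i|

def jap {d : ℕ} (ξ : Vd d) : ℝ := Real.sqrt (1 + ‖ξ‖ ^ 2)

/-- The E_σ^s norm: ‖⟨ξ⟩^σ 2^{s|ξ|} f̂(ξ)‖_{L²}. -/
def Enorm (d : ℕ) (s σ : ℝ) (f : Vd d → ℂ) : ℝ≥0∞ :=
  eLpNorm (fun ξ => ((jap ξ ^ σ * (2 : ℝ) ^ (s * l1 ξ) : ℝ) : ℂ) * 𝓕 f ξ) 2 volume

lemma jap_pos {d : ℕ} (ξ : Vd d) : 0 < jap ξ := by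
  apply Real.sqrt_pos.2; positivity

lemma l1_smul {d : ℕ} {μ : ℝ} (hμ : 0 ≤ μ) (ξ : Vd d) : l1 (μ • ξ) = μ * l1 ξ := by
  simp [l1, Finset.mul_sum, abs_mul, abs_of_nonneg hμ]

lemma fourier_scale {d : ℕ} (φ : Vd d → ℂ) {μ : ℝ} (hμ : 0 < μ) (ξ : Vd d) :
    𝓕 (fun x => φ (μ • x)) ξ = (((μ ^ d : ℝ)⁻¹ : ℝ) : ℂ) * 𝓕 φ (μ⁻¹ • ξ) := by
  rw [Real.fourier_eq, Real.fourier_eq]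
  have h : ∀ x : Vd d, 𝐞 (-⟪x, ξ⟫) • φ (μ • x)
      = (fun v => 𝐞 (-⟪v, μ⁻¹ • ξ⟫) • φ v) (μ • x) := by
    intro x
    simp only [real_inner_smul_left, real_inner_smul_right]
    congr 2
    field_simp
  simp_rw [h]
  rw [MeasureTheory.Measure.integral_comp_smul volume
    (fun v => 𝐞 (-⟪v, μ⁻¹ • ξ⟫) • φ v) μ]
  rw [finrank_euclideanSpace_fin, abs_of_nonneg (by positivity)]
  rw [Complex.real_smul]

lemma lintegral_comp_smul' {d : ℕ} (g : Vd d → ℝ≥0∞) {R : ℝ} (hR : R ≠ 0) :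
    ∫⁻ x : Vd d, g (R • x) = ENNReal.ofReal |(R ^ d)⁻¹| * ∫⁻ x, g x := by
  calc ∫⁻ x : Vd d, g (R • x)
      = ∫⁻ y, g y ∂(Measure.map (fun x : Vd d => R • x) volume) :=
        (MeasureTheory.lintegral_map_equiv g
          (Homeomorph.smul (isUnit_iff_ne_zero.2 hR).unit).toMeasurableEquiv).symm
    _ = _ := by
        rw [show (fun x : Vd d => R • x) = (R • ·) from rfl,
          MeasureTheory.Measure.map_addHaar_smul volume hR,
          lintegral_smul_measure, finrank_euclideanSpace_fin, smul_eq_mul]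

lemma key {d : ℕ} (s σ : ℝ) (φ : Vd d → ℂ) {μ A : ℝ} (hμ : 0 < μ) (hA : 0 ≤ A)
    (hbound : ∀ η : Vd d, jap (μ • η) ^ σ ≤ A * jap η ^ σ) :
    Enorm d (s/μ) σ (fun x => φ (μ • x)) ≤
      ENNReal.ofReal (μ ^ (-(d:ℝ)/2) * A) * Enorm d s σ φ := by
  set G : Vd d → ℂ := fun η => ((jap (μ • η) ^ σ * (2:ℝ) ^ (s * l1 η) : ℝ) : ℂ) * 𝓕 φ η
    with hGdef
  set F : Vd d → ℂ := fun η => ((μ ^ d : ℝ)⁻¹ : ℝ) • G η with hFdef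
  have step1 : Enorm d (s/μ) σ (fun x => φ (μ • x))
      = eLpNorm (fun ξ => F (μ⁻¹ • ξ)) 2 volume := by
    unfold Enorm
    congr 1
    funext ξ
    rw [fourier_scale φ hμ ξ]
    simp only [hFdef, hGdef, Complex.real_smul]
    rw [smul_smul, mul_inv_cancel₀ hμ.ne', one_smul, l1_smul (inv_nonneg.2 hμ.le)]
    rw [show s * (μ⁻¹ * l1 ξ) = s / μ * l1 ξ by ring]
    ring
  have step2 : eLpNorm (fun ξ => F (μ⁻¹ • ξ)) 2 volume
      = ENNReal.ofReal ((μ ^ d : ℝ) ^ (1/2 : ℝ)) * eLpNorm F 2 volume := by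
    rw [eLpNorm_eq_lintegral_rpow_enorm_toReal (by norm_num) (by norm_num),
      eLpNorm_eq_lintegral_rpow_enorm_toReal (by norm_num) (by norm_num)]
    rw [show ∫⁻ ξ : Vd d, ‖F (μ⁻¹ • ξ)‖ₑ ^ (2 : ℝ≥0∞).toReal
        = ∫⁻ ξ : Vd d, (fun η => ‖F η‖ₑ ^ (2 : ℝ≥0∞).toReal) (μ⁻¹ • ξ) from rfl]
    rw [lintegral_comp_smul' (fun η => ‖F η‖ₑ ^ (2 : ℝ≥0∞).toReal)
      (inv_ne_zero hμ.ne')]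
    rw [ENNReal.mul_rpow_of_nonneg _ _ (by positivity)]
    congr 1
    rw [← ENNReal.ofReal_rpow_of_pos (by positivity)]
    congr 2
    rw [inv_pow, inv_inv, abs_of_nonneg (by positivity)]
  have step3 : eLpNorm F 2 volume
      = ENNReal.ofReal ((μ ^ d : ℝ)⁻¹) * eLpNorm G 2 volume := by
    rw [hFdef]
    rw [show (fun η => ((μ ^ d : ℝ)⁻¹ : ℝ) • G η) = ((μ ^ d : ℝ)⁻¹ : ℝ) • G from rfl]
    rw [eLpNorm_const_smul]
    congr 1
    exact Real.enorm_eq_ofReal (by positivity)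
  have step4 : eLpNorm G 2 volume ≤ ENNReal.ofReal A * Enorm d s σ φ := by
    have hmono : eLpNorm G 2 volume ≤
        eLpNorm ((A : ℝ) • fun η : Vd d =>
          ((jap η ^ σ * (2:ℝ) ^ (s * l1 η) : ℝ) : ℂ) * 𝓕 φ η) 2 volume := by
      apply eLpNorm_mono
      intro η
      simp only [hGdef, Pi.smul_apply, Complex.real_smul, norm_mul,
        Complex.norm_real, Real.norm_eq_abs]
      rw [abs_of_nonneg (Real.rpow_nonneg (jap_pos (μ • η)).le σ),
        abs_of_nonneg (le_of_lt (Real.rpow_pos_of_pos two_pos (s * l1 η))),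
        abs_of_nonneg hA,
        abs_of_nonneg (Real.rpow_nonneg (jap_pos η).le σ)]
      calc jap (μ • η) ^ σ * (2:ℝ) ^ (s * l1 η) * ‖𝓕 φ η‖
          ≤ A * jap η ^ σ * (2:ℝ) ^ (s * l1 η) * ‖𝓕 φ η‖ :=
            mul_le_mul_of_nonneg_right
              (mul_le_mul_of_nonneg_right (hbound η)
                (le_of_lt (Real.rpow_pos_of_pos two_pos (s * l1 η)))) (norm_nonneg _)
        _ = A * (jap η ^ σ * (2:ℝ) ^ (s * l1 η) * ‖𝓕 φ η‖) := by ring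
    refine hmono.trans_eq ?_
    rw [eLpNorm_const_smul, ← Real.enorm_eq_ofReal hA]
    rfl
  calc Enorm d (s/μ) σ (fun x => φ (μ • x))
      = ENNReal.ofReal ((μ ^ d : ℝ) ^ (1/2 : ℝ)) *
          (ENNReal.ofReal ((μ ^ d : ℝ)⁻¹) * eLpNorm G 2 volume) := by
        rw [step1, step2, step3]
    _ ≤ ENNReal.ofReal ((μ ^ d : ℝ) ^ (1/2 : ℝ)) *
          (ENNReal.ofReal ((μ ^ d : ℝ)⁻¹) * (ENNReal.ofReal A * Enorm d s σ φ)) := by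
        gcongr
    _ = ENNReal.ofReal (μ ^ (-(d:ℝ)/2) * A) * Enorm d s σ φ := by
        rw [← mul_assoc, ← mul_assoc, ← ENNReal.ofReal_mul (by positivity),
          ← ENNReal.ofReal_mul (by positivity)]
        congr 2
        rw [← Real.rpow_natCast μ d, ← Real.rpow_mul hμ.le, ← Real.rpow_neg hμ.le,
          ← Real.rpow_add hμ]
        congr 1
        ring

lemma jap_smul_lower {d : ℕ} {μ : ℝ} (hμ : 0 < μ) (hμ1 : μ ≤ 1) (η : Vd d) :
    μ * jap η ≤ jap (μ • η) := by
  have hμ2 : μ ^ 2 ≤ 1 := by nlinarith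
  unfold jap
  rw [norm_smul, Real.norm_eq_abs, abs_of_nonneg hμ.le, mul_pow]
  rw [show μ * Real.sqrt (1 + ‖η‖ ^ 2) = Real.sqrt (μ ^ 2 * (1 + ‖η‖ ^ 2)) by
    rw [Real.sqrt_mul (by positivity), Real.sqrt_sq hμ.le]]
  apply Real.sqrt_le_sqrt
  nlinarith [sq_nonneg (‖η‖ : ℝ)]

lemma jap_smul_upper {d : ℕ} {μ : ℝ} (hμ : 0 ≤ μ) (hμ1 : μ ≤ 1) (η : Vd d) :
    jap (μ • η) ≤ jap η := by
  have hμ2 : μ ^ 2 ≤ 1 := by nlinarith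
  unfold jap
  apply Real.sqrt_le_sqrt
  rw [norm_smul, Real.norm_eq_abs, abs_of_nonneg hμ, mul_pow]
  nlinarith [sq_nonneg (‖η‖ : ℝ)]

/-- scaling in E_σ^s for dilations 0 < μ < 1: for s ≤ 0,
‖φ(μ·)‖_{E_σ^{s/μ}} ≤ C μ^{−d/2+σ} ‖φ‖_{E_σ^s} when σ ≤ 0, and
‖φ(μ·)‖_{E_σ^{s/μ}} ≤ C μ^{−d/2} ‖φ‖_{E_σ^s} when σ > 0. -/
theorem stmt11 (d : ℕ) (s σ : ℝ) (hs : s ≤ 0) :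
    ∃ C : ℝ, 0 < C ∧ ∀ φ : Vd d → ℂ, ∀ μ : ℝ, 0 < μ → μ < 1 →
      (σ ≤ 0 → Enorm d (s/μ) σ (fun x => φ (μ • x)) ≤
        ENNReal.ofReal (C * μ ^ (-(d : ℝ)/2 + σ)) * Enorm d s σ φ) ∧
      (0 < σ → Enorm d (s/μ) σ (fun x => φ (μ • x)) ≤
        ENNReal.ofReal (C * μ ^ (-(d : ℝ)/2)) * Enorm d s σ φ) := by
  refine ⟨1, one_pos, fun φ μ hμ hμ1 => ⟨fun hσ => ?_, fun hσ => ?_⟩⟩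
  · rw [show (1:ℝ) * μ ^ (-(d:ℝ)/2 + σ) = μ ^ (-(d:ℝ)/2) * μ ^ σ by
      rw [one_mul, Real.rpow_add hμ]]
    apply key s σ φ hμ (Real.rpow_nonneg hμ.le σ)
    intro η
    have h1 : μ * jap η ≤ jap (μ • η) := jap_smul_lower hμ hμ1.le η
    have h2 := Real.rpow_le_rpow_of_nonpos (mul_pos hμ (jap_pos η)) h1 hσ
    rwa [Real.mul_rpow hμ.le (jap_pos η).le] at h2
  · rw [show (1:ℝ) * μ ^ (-(d:ℝ)/2) = μ ^ (-(d:ℝ)/2) * 1 by ring]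
    apply key s σ φ hμ zero_le_one
    intro η
    rw [one_mul]
    exact Real.rpow_le_rpow (jap_pos _).le (jap_smul_upper hμ.le hμ1.le η) hσ.le
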